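/- Cycle-splitting lemma: let W be a cyclic binary sequence of length L ≥ 2n in which all length-n cyclic substrings are distinct, and suppose both a_1 a_2 ⋯ a_n and (1−a_1) a_2 ⋯ a_n occur as cyclic substrings of W. Then there exist cyclic sequences U and V with |U| + |V| = L, each with all length-n cyclic substrings distinct, such that the length-n cyclic substrings of W are exactly the disjoint union of those of U and V. -/
import Mathlib


/-- The set of length-`n` cyclic substrings of a cyclic sequence `C` of length `L`. -/
def cycSubs (n : ℕ) {L : ℕ} (C : ZMod L → Bool) : Set (Fin n → Bool) :=
  {f | ∃ i : ZMod L, ∀ k : Fin n, f k = C (i + (k : ℕ))}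

/-- All length-`n` cyclic substrings of `C` are distinct. -/
def AllDistinct (n : ℕ) {L : ℕ} (C : ZMod L → Bool) : Prop :=
  ∀ i j : ZMod L, (∀ k : Fin n, C (i + (k : ℕ)) = C (j + (k : ℕ))) → i = j

private lemma natCast_inj_of_lt {L a b : ℕ} (ha : a < L) (hb : b < L)
    (h : (a : ZMod L) = b) : a = b := by
  have h2 := (ZMod.natCast_eq_natCast_iff a b L).mp h
  simpa [Nat.ModEq, Nat.mod_eq_of_lt ha, Nat.mod_eq_of_lt hb] using h2

private lemma pmod {n L : ℕ} [NeZero L] (W : ZMod L → Bool) (x : ZMod L) {c : ℕ} (hc : 0 < c)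
    (hstep : ∀ r : ℕ, r + 2 ≤ n → W (x + (r : ℕ)) = W (x + ((r + c : ℕ) : ZMod L)))
    : ∀ m : ℕ, m + 2 ≤ c + n → W (x + ((m % c : ℕ) : ZMod L)) = W (x + (m : ℕ)) := by
  intro m
  induction m using Nat.strong_induction_on with
  | _ m ih =>
    intro hm
    rcases lt_or_ge m c with h | h
    · rw [Nat.mod_eq_of_lt h]
    · rw [Nat.mod_eq_sub_mod h]
      rw [ih (m - c) (by omega) (by omega)]
      have h2 := hstep (m - c) (by omega)
      rw [show m - c + c = m from by omega] at h2
      exact h2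

private lemma seg {n L : ℕ} [NeZero L] (W : ZMod L → Bool) (hW : AllDistinct n W)
    (x : ZMod L) {c : ℕ} [NeZero c] (hcL : c ≤ L)
    (hper : ∀ r : ℕ, r + 2 ≤ n → W (x + (r : ℕ)) = W (x + ((r + c : ℕ) : ZMod L))) :
    AllDistinct n (fun t : ZMod c => W (x + (t.val : ℕ))) ∧
    cycSubs n (fun t : ZMod c => W (x + (t.val : ℕ)))
      = (fun (p : ZMod L) (k : Fin n) => W (p + ((k : ℕ) : ZMod L))) ''
          {p : ZMod L | ∃ t < c, p = x + (t : ℕ)} := by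
  have hc : 0 < c := NeZero.pos c
  -- key: value of the segment-cycle window
  have key : ∀ (s : ZMod c) (k : Fin n),
      W (x + (((s + ((k : ℕ) : ZMod c)).val : ℕ) : ZMod L))
        = W ((x + ((s.val : ℕ) : ZMod L)) + ((k : ℕ) : ZMod L)) := by
    intro s k
    have hval : (s + ((k : ℕ) : ZMod c)).val = (s.val + (k : ℕ)) % c := by
      rw [ZMod.val_add, ZMod.val_natCast, Nat.add_mod, Nat.mod_mod_of_dvd _ dvd_rfl,
        ← Nat.add_mod]
    rw [hval]
    have h1 := pmod W x hc hper (s.val + (k : ℕ))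
      (by have := ZMod.val_lt s; have := k.isLt; omega)
    rw [h1]
    push_cast
    ring_nf
  constructor
  · intro s t hst
    have h1 : ∀ k : Fin n,
        W ((x + ((s.val : ℕ) : ZMod L)) + ((k : ℕ) : ZMod L))
          = W ((x + ((t.val : ℕ) : ZMod L)) + ((k : ℕ) : ZMod L)) := by
      intro k
      rw [← key s k, ← key t k]
      exact hst k
    have h2 := hW _ _ h1
    have h3 : ((s.val : ℕ) : ZMod L) = ((t.val : ℕ) : ZMod L) := by
      exact add_left_cancel h2
    have h4 : s.val = t.val :=
      natCast_inj_of_lt (lt_of_lt_of_le (ZMod.val_lt s) hcL)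
        (lt_of_lt_of_le (ZMod.val_lt t) hcL) h3
    exact ZMod.val_injective c h4
  · ext f
    constructor
    · rintro ⟨s, hs⟩
      refine ⟨x + ((s.val : ℕ) : ZMod L), ⟨s.val, ZMod.val_lt s, rfl⟩, ?_⟩
      funext k
      show W ((x + ((s.val : ℕ) : ZMod L)) + ((k : ℕ) : ZMod L)) = f k
      rw [← key s k]
      exact (hs k).symm
    · rintro ⟨p, ⟨t, htc, rfl⟩, rfl⟩
      refine ⟨(t : ZMod c), fun k => ?_⟩
      have hv : ((t : ZMod c)).val = t := ZMod.val_natCast_of_lt htc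
      show (fun (p : ZMod L) (k : Fin n) => W (p + ((k : ℕ) : ZMod L))) (x + (t : ZMod L)) k
        = W (x + (((t : ZMod c) + ((k : ℕ) : ZMod c)).val : ℕ))
      rw [key ((t : ZMod c)) k, hv]

theorem cycle_splitting (n L : ℕ) (hn : 0 < n) (hL : 2 * n ≤ L)
    (W : ZMod L → Bool) (hWdist : AllDistinct n W)
    (a : Fin n → Bool) (haW : a ∈ cycSubs n W)
    (haW' : Function.update a ⟨0, hn⟩ (!a ⟨0, hn⟩) ∈ cycSubs n W) :
    ∃ (LU LV : ℕ) (U : ZMod LU → Bool) (V : ZMod LV → Bool),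
      LU + LV = L ∧ AllDistinct n U ∧ AllDistinct n V ∧
      cycSubs n W = cycSubs n U ∪ cycSubs n V ∧
      Disjoint (cycSubs n U) (cycSubs n V) := by
  haveI : NeZero L := ⟨by omega⟩
  obtain ⟨i, hi⟩ := haW
  obtain ⟨j, hj⟩ := haW'
  -- basic facts
  have F0 : W i ≠ W j := by
    have h1 := hi ⟨0, hn⟩
    have h2 := hj ⟨0, hn⟩
    rw [Function.update_self] at h2
    simp only [Fin.val_mk, Nat.cast_zero, add_zero] at h1 h2
    rw [← h1, ← h2]
    exact fun h => by simpa using h.symm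
  have F1 : ∀ t : ℕ, 0 < t → t < n → W (i + (t : ℕ)) = W (j + (t : ℕ)) := by
    intro t ht htn
    have h1 := hi ⟨t, htn⟩
    have h2 := hj ⟨t, htn⟩
    rw [Function.update_of_ne (by simp [Fin.ext_iff]; omega)] at h2
    simp only [Fin.val_mk] at h1 h2
    rw [← h1, ← h2]
  have hij0 : i ≠ j := fun h => F0 (by rw [h])
  set d : ℕ := (j - i).val with hd
  have hd0 : 0 < d := by
    rcases Nat.eq_zero_or_pos d with h | h
    · exact absurd (sub_eq_zero.mp ((ZMod.val_eq_zero _).mp h)).symm hij0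
    · exact h
  have hdL : d < L := ZMod.val_lt _
  set e : ℕ := L - d with he
  have he0 : 0 < e := by omega
  have hde : d + e = L := by omega
  haveI : NeZero d := ⟨hd0.ne'⟩
  haveI : NeZero e := ⟨he0.ne'⟩
  have hijd : i + (d : ZMod L) = j := by
    have : ((d : ℕ) : ZMod L) = j - i := ZMod.natCast_rightInverse (j - i)
    rw [this]; ring
  have hjie : j + (e : ZMod L) = i := by
    have h1 : ((e : ℕ) : ZMod L) = (L : ZMod L) - (d : ZMod L) := by
      rw [← Nat.cast_sub (le_of_lt hdL)]
    rw [h1, ZMod.natCast_self, zero_sub, ← hijd]; ring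
  -- periodicity hypotheses for the two segments
  have perU : ∀ r : ℕ, r + 2 ≤ n →
      W ((i + 1) + (r : ℕ)) = W ((i + 1) + ((r + d : ℕ) : ZMod L)) := by
    intro r hr
    have e1 : (i + 1) + ((r : ℕ) : ZMod L) = i + ((r + 1 : ℕ) : ZMod L) := by
      push_cast; ring
    have e2 : (i + 1) + ((r + d : ℕ) : ZMod L) = j + ((r + 1 : ℕ) : ZMod L) := by
      rw [← hijd]; push_cast; ring
    rw [e1, e2]
    exact F1 (r + 1) (by omega) (by omega)
  have perV : ∀ r : ℕ, r + 2 ≤ n →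
      W ((j + 1) + (r : ℕ)) = W ((j + 1) + ((r + e : ℕ) : ZMod L)) := by
    intro r hr
    have e1 : (j + 1) + ((r : ℕ) : ZMod L) = j + ((r + 1 : ℕ) : ZMod L) := by
      push_cast; ring
    have e2 : (j + 1) + ((r + e : ℕ) : ZMod L) = i + ((r + 1 : ℕ) : ZMod L) := by
      rw [← hjie]; push_cast; ring
    rw [e1, e2]
    exact (F1 (r + 1) (by omega) (by omega)).symm
  obtain ⟨hUdist, hUsubs⟩ := seg W hWdist (i + 1) (c := d) (le_of_lt hdL) perU
  obtain ⟨hVdist, hVsubs⟩ := seg W hWdist (j + 1) (c := e) (by omega) perV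
  refine ⟨d, e, _, _, hde, hUdist, hVdist, ?_, ?_⟩
  · -- union
    rw [hUsubs, hVsubs, ← Set.image_union]
    ext f
    constructor
    · rintro ⟨p, hp⟩
      refine ⟨p, ?_, (funext fun k => (hp k).symm)⟩
      -- p is in SU ∪ SV
      set m : ℕ := (p - (i + 1)).val with hm
      have hmp : p = (i + 1) + ((m : ℕ) : ZMod L) := by
        have : ((m : ℕ) : ZMod L) = p - (i + 1) := ZMod.natCast_rightInverse _
        rw [this]; ring
      have hmL : m < L := ZMod.val_lt _
      rcases lt_or_ge m d with h | h
      · exact Or.inl ⟨m, h, hmp⟩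
      · refine Or.inr ⟨m - d, by omega, ?_⟩
        rw [hmp, ← hijd, Nat.cast_sub h]
        ring
    · rintro ⟨p, _, rfl⟩
      exact ⟨p, fun k => rfl⟩
  · -- disjointness
    rw [hUsubs, hVsubs]
    apply Set.disjoint_image_image
    rintro p ⟨t₁, ht₁, rfl⟩ q ⟨t₂, ht₂, rfl⟩ hpq
    -- first: the windows being equal forces the positions equal
    have hpos : (i + 1) + ((t₁ : ℕ) : ZMod L) = (j + 1) + ((t₂ : ℕ) : ZMod L) := by
      apply hWdist
      intro k
      exact congrFun hpq k
    -- translate to a nat equation and contradict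
    have h2 : ((t₁ : ℕ) : ZMod L) = ((d + t₂ : ℕ) : ZMod L) := by
      have : (j + 1) + ((t₂ : ℕ) : ZMod L) = (i + 1) + ((d + t₂ : ℕ) : ZMod L) := by
        rw [← hijd]; push_cast; ring
      rw [this] at hpos
      exact add_left_cancel hpos
    have h3 : t₁ = d + t₂ := natCast_inj_of_lt (by omega) (by omega) h2
    omega
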